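/- Let λ > 0, f_λ(x) = x·e^{λx²} on [0,∞), and Φ(y) = y·f_λ^{-1}(y). Then Φ is strictly convex on (0,∞). -/

import Mathlib

open Real Filter Set

private lemma aux_hasDerivAt_F (l x : ℝ) :
    HasDerivAt (fun x : ℝ => x * Real.exp (l * x ^ 2))
      (Real.exp (l * x ^ 2) * (1 + 2 * l * x ^ 2)) x := by
  have h1 : HasDerivAt (fun x : ℝ => l * x ^ 2) (l * (2 * x)) x := by
    simpa using (hasDerivAt_pow 2 x).const_mul l
  have h3 := (hasDerivAt_id x).mul h1.exp
  simp only [id_eq] at h3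
  refine h3.congr_deriv ?_
  ring

private lemma aux_hasDerivAt_psi (l t : ℝ) :
    HasDerivAt (fun t : ℝ => Real.exp (l * t ^ 2) * (1 + 2 * l * t ^ 2))
      (Real.exp (l * t ^ 2) * (2 * l * t * (3 + 2 * l * t ^ 2))) t := by
  have h1 : HasDerivAt (fun t : ℝ => l * t ^ 2) (l * (2 * t)) t := by
    simpa using (hasDerivAt_pow 2 t).const_mul l
  have h2 : HasDerivAt (fun t : ℝ => 1 + 2 * l * t ^ 2) (2 * l * (2 * t)) t := by
    simpa using ((hasDerivAt_pow 2 t).const_mul (2 * l)).const_add 1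
  have h3 := h1.exp.mul h2
  refine h3.congr_deriv ?_
  ring

/-- Let `λ > 0`, `f_λ(x) = x·e^{λx²}` on `[0,∞)`, `g = f_λ⁻¹` its inverse bijection,
and `Φ(y) = y·g(y)`. Then `Φ` is strictly convex on `(0,∞)`. -/
theorem stmt_4 (l : ℝ) (hl : 0 < l) (g : ℝ → ℝ)
    (hg_left : ∀ x : ℝ, 0 ≤ x → g (x * Real.exp (l * x ^ 2)) = x)
    (hg_right : ∀ y : ℝ, 0 ≤ y → g y * Real.exp (l * (g y) ^ 2) = y)
    (hg_nonneg : ∀ y : ℝ, 0 ≤ y → 0 ≤ g y)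
    (Φ : ℝ → ℝ) (hΦ : ∀ y : ℝ, Φ y = y * g y) :
    StrictConvexOn ℝ (Set.Ioi (0 : ℝ)) Φ := by
  set F : ℝ → ℝ := fun x => x * Real.exp (l * x ^ 2) with hF
  have hFd : ∀ x, HasDerivAt F (Real.exp (l * x ^ 2) * (1 + 2 * l * x ^ 2)) x :=
    fun x => aux_hasDerivAt_F l x
  have hdpos : ∀ x : ℝ, 0 < Real.exp (l * x ^ 2) * (1 + 2 * l * x ^ 2) := by
    intro x
    have h1 : 0 ≤ 2 * l * x ^ 2 := by positivity
    exact mul_pos (Real.exp_pos _) (by linarith)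
  have hmono : StrictMono F := by
    apply strictMono_of_deriv_pos
    intro x
    rw [(hFd x).deriv]
    exact hdpos x
  have hFcont : Continuous F := by
    continuity
  -- surjectivity of F
  have hsurj : Function.Surjective F := by
    apply hFcont.surjective
    · apply tendsto_atTop_mono' atTop ?_ tendsto_id
      filter_upwards [eventually_ge_atTop (0:ℝ)] with x hx
      have h1 : (1 : ℝ) ≤ Real.exp (l * x ^ 2) := Real.one_le_exp (by positivity)
      have : (x : ℝ) * 1 ≤ x * Real.exp (l * x ^ 2) :=
        mul_le_mul_of_nonneg_left h1 hx
      simpa [F] using this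
    · apply tendsto_atBot_mono' atBot ?_ tendsto_id
      filter_upwards [eventually_le_atBot (0:ℝ)] with x hx
      have h1 : (1 : ℝ) ≤ Real.exp (l * x ^ 2) := Real.one_le_exp (by positivity)
      have : x * Real.exp (l * x ^ 2) ≤ x * 1 :=
        mul_le_mul_of_nonpos_left h1 hx
      simpa [F] using this
  set e : ℝ ≃o ℝ := StrictMono.orderIsoOfSurjective F hmono hsurj with he
  set G : ℝ → ℝ := fun y => e.symm y with hG
  have hGF : ∀ y, F (G y) = y := fun y =>
    StrictMono.orderIsoOfSurjective_self_symm_apply F hmono hsurj y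
  have hGcont : Continuous G := by
    have := (OrderIso.continuous e.symm)
    exact this
  have hGd : ∀ y, HasDerivAt G
      (Real.exp (l * (G y) ^ 2) * (1 + 2 * l * (G y) ^ 2))⁻¹ y := by
    intro y
    exact HasDerivAt.of_local_left_inverse hGcont.continuousAt (hFd (G y))
      (hdpos (G y)).ne' (Eventually.of_forall hGF)
  -- g agrees with G on nonnegatives
  have hgG : ∀ y : ℝ, 0 ≤ y → g y = G y := by
    intro y hy
    apply hmono.injective
    rw [hGF y]
    exact hg_right y hy
  have hG0 : G 0 = 0 := by
    apply hmono.injective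
    rw [hGF 0]
    simp [F]
  have hGpos : ∀ y : ℝ, 0 < y → 0 < G y := by
    intro y hy
    have : e.symm 0 < e.symm y := e.symm.strictMono hy
    rwa [show e.symm (0:ℝ) = G 0 from rfl, hG0] at this
  -- first derivative
  set D1 : ℝ → ℝ := fun y =>
    G y + y * (Real.exp (l * (G y) ^ 2) * (1 + 2 * l * (G y) ^ 2))⁻¹ with hD1
  have hΦd : ∀ y : ℝ, 0 < y → HasDerivAt Φ (D1 y) y := by
    intro y hy
    have h1 : HasDerivAt (fun z => z * G z)
        (1 * G y + y * (Real.exp (l * (G y) ^ 2) * (1 + 2 * l * (G y) ^ 2))⁻¹) y :=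
      (hasDerivAt_id y).mul (hGd y)
    have heq : Φ =ᶠ[nhds y] fun z => z * G z := by
      filter_upwards [isOpen_Ioi.mem_nhds (show y ∈ Set.Ioi (0:ℝ) from hy)] with z hz
      rw [hΦ z, hgG z (le_of_lt hz)]
    have := h1.congr_of_eventuallyEq heq
    refine this.congr_deriv ?_
    simp [hD1]
  have hΦderiv : ∀ y : ℝ, 0 < y → deriv Φ y = D1 y := fun y hy => (hΦd y hy).deriv
  -- second derivative
  have hD1d : ∀ y : ℝ, 0 < y → ∃ c, 0 < c ∧ HasDerivAt D1 c y := by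
    intro y hy
    set x := G y with hx
    set E := Real.exp (l * x ^ 2) with hE
    set d := E * (1 + 2 * l * x ^ 2) with hd
    have hdp : 0 < d := hdpos x
    have hEp : 0 < E := Real.exp_pos _
    have hxpos : 0 < x := hGpos y hy
    have hyx : y = x * E := (hGF y).symm
    -- derivative of the w := ψ ∘ G part
    have hw : HasDerivAt (fun z => Real.exp (l * (G z) ^ 2) * (1 + 2 * l * (G z) ^ 2))
        (E * (2 * l * x * (3 + 2 * l * x ^ 2)) * d⁻¹) y := by
      have := (aux_hasDerivAt_psi l x).comp y (hGd y)
      exact this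
    have hu : HasDerivAt (fun z => (Real.exp (l * (G z) ^ 2) * (1 + 2 * l * (G z) ^ 2))⁻¹)
        (-(E * (2 * l * x * (3 + 2 * l * x ^ 2)) * d⁻¹) / d ^ 2) y := by
      exact hw.inv hdp.ne'
    have hyu : HasDerivAt (fun z => z * (Real.exp (l * (G z) ^ 2) * (1 + 2 * l * (G z) ^ 2))⁻¹)
        (1 * d⁻¹ + y * (-(E * (2 * l * x * (3 + 2 * l * x ^ 2)) * d⁻¹) / d ^ 2)) y :=
      (hasDerivAt_id y).mul hu
    have htot : HasDerivAt D1
        (d⁻¹ + (1 * d⁻¹ + y * (-(E * (2 * l * x * (3 + 2 * l * x ^ 2)) * d⁻¹) / d ^ 2))) y :=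
      (hGd y).add hyu
    refine ⟨_, ?_, htot⟩
    have hkey : d⁻¹ + (1 * d⁻¹ + y * (-(E * (2 * l * x * (3 + 2 * l * x ^ 2)) * d⁻¹) / d ^ 2))
        = (2 + 2 * l * x ^ 2 + 4 * l ^ 2 * x ^ 4) * E ^ 2 / d ^ 3 := by
      rw [hyx, hd]
      field_simp
      ring
    rw [hkey]
    apply div_pos
    · have h1 : 0 < 2 * l * x ^ 2 := by positivity
      have h2 : 0 < 4 * l ^ 2 * x ^ 4 := by positivity
      nlinarith [sq_nonneg E, hEp]
    · positivity
  -- assemble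
  apply strictConvexOn_of_deriv2_pos (convex_Ioi 0)
  · apply ContinuousOn.congr (f := fun y => y * G y)
    · exact (continuous_id.mul hGcont).continuousOn
    · intro y hy
      rw [hΦ y, hgG y (le_of_lt (Set.mem_Ioi.mp hy))]
  · intro y hy
    rw [interior_Ioi] at hy
    have hy' : (0:ℝ) < y := hy
    obtain ⟨c, hc, hcd⟩ := hD1d y hy'
    have heq2 : deriv Φ =ᶠ[nhds y] D1 := by
      filter_upwards [isOpen_Ioi.mem_nhds (show y ∈ Set.Ioi (0:ℝ) from hy')] with z hz
      exact hΦderiv z hz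
    have : HasDerivAt (deriv Φ) c y := hcd.congr_of_eventuallyEq heq2
    show 0 < deriv (deriv Φ) y
    rw [this.deriv]
    exact hc
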